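/- In an almost-Reedy category, any two fundamental factorizations of the same morphism, of degrees δ and δ', are connected by a zigzag of fundamental factorizations passing only through intermediate factorizations of degree strictly less than max(δ, δ'). -/

import Mathlib

open CategoryTheory Category

universe w v u

variable {C : Type u} [Category.{v} C]

/-- A fundamental factorization of `f : x ⟶ y`: a factorization through an
object of degree strictly smaller than the degrees of both `x` and `y`. -/
structure FdFact (deg : C → Ordinal.{w}) {x y : C} (f : x ⟶ y) where
  z : C
  g : x ⟶ z
  h : z ⟶ y
  fac : g ≫ h = f
  lt_src : deg z < deg x
  lt_tgt : deg z < deg y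

/-- A morphism is basic if it admits no fundamental factorization. -/
def Basic (deg : C → Ordinal.{w}) {x y : C} (f : x ⟶ y) : Prop :=
  IsEmpty (FdFact deg f)

/-- A connecting morphism between two fundamental factorizations of `f`. -/
def FdConn (deg : C → Ordinal.{w}) {x y : C} {f : x ⟶ y}
    (F F' : FdFact deg f) : Prop :=
  ∃ k : F.z ⟶ F'.z, F.g ≫ k = F'.g ∧ k ≫ F'.h = F.h

/-- Two fundamental factorizations are connected by a zigzag of connecting
morphisms. -/
def FdZigzag (deg : C → Ordinal.{w}) {x y : C} {f : x ⟶ y} :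
    FdFact deg f → FdFact deg f → Prop :=
  Relation.ReflTransGen (fun F F' => FdConn deg F F' ∨ FdConn deg F' F)

/-- `C` (with the degree function `deg`) is almost-Reedy: the basic level
morphisms are exactly the identities, and the category of fundamental
factorizations of any (non-basic) morphism is connected. -/
def AlmostReedy (deg : C → Ordinal.{w}) : Prop :=
  (∀ x : C, Basic deg (𝟙 x)) ∧
  (∀ ⦃x y : C⦄ (f : x ⟶ y), deg x = deg y → Basic deg f → x = y ∧ HEq f (𝟙 x)) ∧
  (∀ ⦃x y : C⦄ (f : x ⟶ y) (F F' : FdFact deg f), FdZigzag deg F F')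

/-- The class `C⃖` of basic morphisms that non-strictly lower degree. -/
def Lowering (deg : C → Ordinal.{w}) {x y : C} (f : x ⟶ y) : Prop :=
  Basic deg f ∧ deg y ≤ deg x

/-- The class `C⃗` of basic morphisms that non-strictly raise degree. -/
def Raising (deg : C → Ordinal.{w}) {x y : C} (f : x ⟶ y) : Prop :=
  Basic deg f ∧ deg x ≤ deg y

namespace AlmostReedyAux

/-- The symmetric edge relation between fundamental factorizations. -/
abbrev E (deg : C → Ordinal.{w}) {x y : C} {f : x ⟶ y} (A B : FdFact deg f) : Prop :=
  FdConn deg A B ∨ FdConn deg B A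

variable {deg : C → Ordinal.{w}}

/-- Generic: extract a `List.Chain` from a `ReflTransGen`. -/
lemma exists_chain_of_rtg {α : Type*} {R : α → α → Prop} {a b : α}
    (h : Relation.ReflTransGen R a b) :
    a = b ∨ ∃ l, List.Chain R a (l ++ [b]) := by
  induction h with
  | refl => exact Or.inl rfl
  | @tail b' c hab hbc ih =>
    rcases ih with rfl | ⟨l, hl⟩
    · exact Or.inr ⟨[], List.Chain.cons hbc List.Chain.nil⟩
    · refine Or.inr ⟨l ++ [b'], ?_⟩
      have := (List.isChain_cons_split (l₁ := l) (l₂ := [c])).mpr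
        ⟨hl, List.Chain.cons hbc List.Chain.nil⟩
      simpa [List.Chain] using this

lemma fdfact_eq_of_basic (hC : AlmostReedy deg) {x y : C} {f : x ⟶ y}
    {A B : FdFact deg f} (k : A.z ⟶ B.z) (h1 : A.g ≫ k = B.g) (h2 : k ≫ B.h = A.h)
    (hd : deg A.z = deg B.z) (hb : Basic deg k) : A = B := by
  obtain ⟨hz, hk⟩ := hC.2.1 k hd hb
  obtain ⟨z, g, h, fac, l1, l2⟩ := A
  obtain ⟨z', g', h', fac', l1', l2'⟩ := B
  dsimp at k hz hk h1 h2
  subst hz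
  rw [eq_of_heq hk, comp_id] at h1
  rw [eq_of_heq hk, id_comp] at h2
  subst h1; subst h2
  rfl

/-- Turn a fundamental factorization of `G.g` into one of `f`. -/
def phiG {x y : C} {f : x ⟶ y} (G : FdFact deg f) (H : FdFact deg G.g) :
    FdFact deg f where
  z := H.z
  g := H.g
  h := H.h ≫ G.h
  fac := by rw [← assoc, H.fac, G.fac]
  lt_src := H.lt_src
  lt_tgt := H.lt_tgt.trans G.lt_tgt

/-- Turn a fundamental factorization of `G.h` into one of `f`. -/
def phiH {x y : C} {f : x ⟶ y} (G : FdFact deg f) (H : FdFact deg G.h) :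
    FdFact deg f where
  z := H.z
  g := G.g ≫ H.g
  h := H.h
  fac := by rw [assoc, H.fac, G.fac]
  lt_src := H.lt_src.trans G.lt_src
  lt_tgt := H.lt_tgt

lemma phiG_edge {x y : C} {f : x ⟶ y} {G : FdFact deg f} {H H' : FdFact deg G.g}
    (e : E deg H H') : E deg (phiG G H) (phiG G H') := by
  rcases e with ⟨k, h1, h2⟩ | ⟨k, h1, h2⟩
  · exact Or.inl ⟨k, h1, by dsimp [phiG]; rw [← assoc, h2]⟩
  · exact Or.inr ⟨k, h1, by dsimp [phiG]; rw [← assoc, h2]⟩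

lemma phiH_edge {x y : C} {f : x ⟶ y} {G : FdFact deg f} {H H' : FdFact deg G.h}
    (e : E deg H H') : E deg (phiH G H) (phiH G H') := by
  rcases e with ⟨k, h1, h2⟩ | ⟨k, h1, h2⟩
  · exact Or.inl ⟨k, by dsimp [phiH]; rw [assoc, h1], h2⟩
  · exact Or.inr ⟨k, by dsimp [phiH]; rw [assoc, h1], h2⟩

lemma intoAux (hC : AlmostReedy deg) {x y : C} {f : x ⟶ y} (G P : FdFact deg f)
    (k : P.z ⟶ G.z) (h1 : P.g ≫ k = G.g) (h2 : k ≫ G.h = P.h)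
    (dP : deg P.z ≤ deg G.z) :
    P = G ∨ ∃ Ph : FdFact deg G.g, FdConn deg P (phiG G Ph) := by
  rcases dP.lt_or_eq with hlt | heq
  · right
    refine ⟨⟨P.z, P.g, k, h1, P.lt_src, hlt⟩, ⟨𝟙 P.z, comp_id _, ?_⟩⟩
    dsimp [phiG]; rw [id_comp, h2]
  · by_cases hb : Basic deg k
    · exact Or.inl (fdfact_eq_of_basic hC k h1 h2 heq hb)
    · right
      obtain ⟨F0⟩ := not_isEmpty_iff.mp hb
      refine ⟨⟨F0.z, P.g ≫ F0.g, F0.h, by rw [assoc, F0.fac, h1],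
        F0.lt_src.trans P.lt_src, F0.lt_tgt⟩, ⟨F0.g, rfl, ?_⟩⟩
      dsimp [phiG]; rw [← assoc, F0.fac, h2]

lemma outAux (hC : AlmostReedy deg) {x y : C} {f : x ⟶ y} (G P : FdFact deg f)
    (k : G.z ⟶ P.z) (h1 : G.g ≫ k = P.g) (h2 : k ≫ P.h = G.h)
    (dP : deg P.z ≤ deg G.z) :
    P = G ∨ ∃ Ph : FdFact deg G.h, FdConn deg (phiH G Ph) P := by
  rcases dP.lt_or_eq with hlt | heq
  · right
    refine ⟨⟨P.z, k, P.h, h2, hlt, P.lt_tgt⟩, ⟨𝟙 P.z, ?_, ?_⟩⟩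
    · dsimp [phiH]; rw [comp_id, h1]
    · dsimp [phiH]; rw [id_comp]
  · by_cases hb : Basic deg k
    · exact Or.inl (fdfact_eq_of_basic hC k h1 h2 heq.symm hb).symm
    · right
      obtain ⟨F0⟩ := not_isEmpty_iff.mp hb
      refine ⟨⟨F0.z, F0.g, F0.h ≫ P.h, by rw [← assoc, F0.fac, h2],
        F0.lt_src, F0.lt_tgt.trans P.lt_tgt⟩, ⟨F0.h, ?_, rfl⟩⟩
      dsimp [phiH]; rw [assoc, F0.fac, h1]

lemma assemble {c : Ordinal.{w}} {x y : C} {f : x ⟶ y} {P Q W₁ W₂ : FdFact deg f}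
    (e1 : E deg P W₁) (e2 : E deg W₂ Q) (hW₁ : deg W₁.z < c) (hW₂ : deg W₂.z < c)
    (hmid : Relation.ReflTransGen
      (fun a b : {H : FdFact deg f // deg H.z < c} => E deg a.1 b.1)
      ⟨W₁, hW₁⟩ ⟨W₂, hW₂⟩) :
    ∃ m, List.Chain (E deg) P (m ++ [Q]) ∧ ∀ H ∈ m, deg H.z < c := by
  rcases exists_chain_of_rtg hmid with heq | ⟨l, hl⟩
  · have hW : W₁ = W₂ := congrArg Subtype.val heq
    subst hW
    refine ⟨[W₁], List.Chain.cons e1 (List.Chain.cons e2 List.Chain.nil), ?_⟩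
    intro H hH
    simp only [List.mem_singleton] at hH
    subst hH; exact hW₁
  · have hl' : List.Chain (E deg) W₁ ((l.map Subtype.val) ++ [W₂]) := by
      have := List.isChain_map_of_isChain (f := Subtype.val)
        (S := E deg) (fun a b e => e) hl
      simpa [List.Chain] using this
    refine ⟨W₁ :: (l.map Subtype.val ++ [W₂]), ?_, ?_⟩
    · refine List.Chain.cons e1 ?_
      have := (List.isChain_cons_split (l₁ := l.map Subtype.val) (l₂ := [Q])).mpr
        ⟨hl', List.Chain.cons e2 List.Chain.nil⟩
      simpa [List.Chain] using this
    · intro H hH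
      simp only [List.mem_cons, List.mem_append, List.mem_map,
        List.mem_singleton] at hH
      rcases hH with rfl | ⟨⟨H', hH'⟩, _, rfl⟩ | (rfl | h)
      · exact hW₁
      · exact hH'
      · exact hW₂
      · exact absurd h List.not_mem_nil

lemma elim (hC : AlmostReedy deg) {x y : C} {f : x ⟶ y} (G P Q : FdFact deg f)
    (hP : E deg P G) (hQ : E deg G Q)
    (dP : deg P.z ≤ deg G.z) (dQ : deg Q.z ≤ deg G.z) :
    ∃ m, List.Chain (E deg) P (m ++ [Q]) ∧ ∀ H ∈ m, deg H.z < deg G.z := by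
  rcases hP with ⟨k₁, p1, p2⟩ | ⟨k₁, p1, p2⟩ <;> rcases hQ with ⟨k₂, q1, q2⟩ | ⟨k₂, q1, q2⟩
  · -- FdConn P G, FdConn G Q : compose
    exact ⟨[], List.Chain.cons
      (Or.inl ⟨k₁ ≫ k₂, by rw [← assoc, p1, q1], by rw [assoc, q2, p2]⟩)
      List.Chain.nil, by simp⟩
  · -- FdConn P G, FdConn Q G : both into G
    rcases intoAux hC G P k₁ p1 p2 dP with rfl | ⟨Ph, eP⟩
    · exact ⟨[], List.Chain.cons (Or.inr ⟨k₂, q1, q2⟩) List.Chain.nil, by simp⟩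
    rcases intoAux hC G Q k₂ q1 q2 dQ with rfl | ⟨Qh, eQ⟩
    · exact ⟨[], List.Chain.cons (Or.inl ⟨k₁, p1, p2⟩) List.Chain.nil, by simp⟩
    exact assemble (Or.inl eP) (Or.inr eQ) Ph.lt_tgt Qh.lt_tgt
      (Relation.ReflTransGen.lift
        (fun Hh : FdFact deg G.g =>
          (⟨phiG G Hh, Hh.lt_tgt⟩ : {H : FdFact deg f // deg H.z < deg G.z}))
        (p := fun a b => E deg a.1 b.1) (r := fun H H' => E deg H H')
        (fun a b e => by exact phiG_edge e) Ph Qh (hC.2.2 G.g Ph Qh))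
  · -- FdConn G P, FdConn G Q : both out of G
    rcases outAux hC G P k₁ p1 p2 dP with rfl | ⟨Ph, eP⟩
    · exact ⟨[], List.Chain.cons (Or.inl ⟨k₂, q1, q2⟩) List.Chain.nil, by simp⟩
    rcases outAux hC G Q k₂ q1 q2 dQ with rfl | ⟨Qh, eQ⟩
    · exact ⟨[], List.Chain.cons (Or.inr ⟨k₁, p1, p2⟩) List.Chain.nil, by simp⟩
    exact assemble (Or.inr eP) (Or.inl eQ) Ph.lt_src Qh.lt_src
      (Relation.ReflTransGen.lift
        (fun Hh : FdFact deg G.h =>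
          (⟨phiH G Hh, Hh.lt_src⟩ : {H : FdFact deg f // deg H.z < deg G.z}))
        (p := fun a b => E deg a.1 b.1) (r := fun H H' => E deg H H')
        (fun a b e => by exact phiH_edge e) Ph Qh (hC.2.2 G.h Ph Qh))
  · -- FdConn G P, FdConn Q G : compose
    exact ⟨[], List.Chain.cons
      (Or.inr ⟨k₂ ≫ k₁, by rw [← assoc, q1, p1], by rw [assoc, p2, q2]⟩)
      List.Chain.nil, by simp⟩

/-- Replace the middle vertex `G` of a chain by a new stretch. -/
lemma chain_surgery {α : Type*} {R : α → α → Prop} {Cm : List α → Prop}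
    {A G B : α} {l₁ l₂ : List α}
    (h₁ : List.Chain R A (l₁ ++ [G])) (h₂ : List.Chain R G (l₂ ++ [B]))
    (key : ∀ P Q, R P G → R G Q → (P = A ∨ P ∈ l₁) → (Q = B ∨ Q ∈ l₂) →
      ∃ m, List.Chain R P (m ++ [Q]) ∧ Cm m) :
    ∃ m, List.Chain R A ((l₁ ++ m ++ l₂) ++ [B]) ∧ Cm m := by
  rcases List.eq_nil_or_concat l₁ with rfl | ⟨l₁', P, rfl⟩
  · have rAG : R A G := by simpa using List.isChain_pair.mp h₁
    cases l₂ with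
    | nil =>
      have rGB : R G B := by simpa using List.isChain_pair.mp h₂
      obtain ⟨m, cm, hc⟩ := key A B rAG rGB (Or.inl rfl) (Or.inl rfl)
      exact ⟨m, by simpa using cm, hc⟩
    | cons Q t =>
      obtain ⟨rGQ, hQt⟩ := List.chain_cons.mp h₂
      obtain ⟨m, cm, hc⟩ := key A Q rAG rGQ (Or.inl rfl) (Or.inr (by simp))
      refine ⟨m, ?_, hc⟩
      have := (List.isChain_cons_split (l₁ := m) (l₂ := t ++ [B])).mpr ⟨cm, hQt⟩
      simpa [List.append_assoc, List.Chain] using this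
  · have h₁' : List.Chain R A (l₁' ++ P :: [G]) := by
      simpa [List.append_assoc] using h₁
    obtain ⟨hpre, hPG⟩ := List.isChain_cons_split.mp h₁'
    have rPG : R P G := List.isChain_pair.mp hPG
    cases l₂ with
    | nil =>
      have rGB : R G B := by simpa using List.isChain_pair.mp h₂
      obtain ⟨m, cm, hc⟩ := key P B rPG rGB (Or.inr (by simp)) (Or.inl rfl)
      refine ⟨m, ?_, hc⟩
      have := (List.isChain_cons_split (l₁ := l₁') (l₂ := m ++ [B])).mpr ⟨hpre, cm⟩
      simpa [List.append_assoc, List.Chain] using this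
    | cons Q t =>
      obtain ⟨rGQ, hQt⟩ := List.chain_cons.mp h₂
      obtain ⟨m, cm, hc⟩ := key P Q rPG rGQ (Or.inr (by simp)) (Or.inr (by simp))
      refine ⟨m, ?_, hc⟩
      have hmid := (List.isChain_cons_split (l₁ := m) (l₂ := t ++ [B])).mpr ⟨cm, hQt⟩
      have := (List.isChain_cons_split (l₁ := l₁') (l₂ := m ++ Q :: (t ++ [B]))).mpr
        ⟨hpre, hmid⟩
      simpa [List.append_assoc, List.Chain] using this

section FoldrMax

variable {x y : C} {f : x ⟶ y}

lemma le_foldr_max (l : List (FdFact deg f)) (init : Ordinal.{w}) :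
    init ≤ l.foldr (fun G r => max (deg G.z) r) init := by
  induction l with
  | nil => exact le_rfl
  | cons G t ih => exact ih.trans (le_max_right _ _)

lemma mem_le_foldr_max (l : List (FdFact deg f)) (init : Ordinal.{w}) :
    ∀ G ∈ l, deg G.z ≤ l.foldr (fun G r => max (deg G.z) r) init := by
  induction l with
  | nil => simp
  | cons H t ih =>
    intro G hG
    rcases List.mem_cons.mp hG with rfl | hG
    · exact le_max_left _ _
    · exact (ih G hG).trans (le_max_right _ _)

lemma foldr_max_lt (l : List (FdFact deg f)) {init c : Ordinal.{w}}
    (hinit : init < c) (h : ∀ G ∈ l, deg G.z < c) :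
    l.foldr (fun G r => max (deg G.z) r) init < c := by
  induction l with
  | nil => exact hinit
  | cons H t ih =>
    exact max_lt (h H (by simp)) (ih fun G hG => h G (List.mem_cons_of_mem _ hG))

end FoldrMax

lemma main (hC : AlmostReedy deg) (d : Ordinal.{w}) :
    ∀ (n : ℕ) {x y : C} (f : x ⟶ y) (A B : FdFact deg f) (l : List (FdFact deg f)),
      List.Chain (E deg) A (l ++ [B]) → deg A.z ≤ d → deg B.z ≤ d →
      (∀ G ∈ l, deg G.z ≤ d) →
      l.countP (fun G => decide (deg G.z = d)) ≤ n →
      ∃ l', List.Chain (E deg) A (l' ++ [B]) ∧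
        ∀ G ∈ l', deg G.z < max (deg A.z) (deg B.z) := by
  induction d using Ordinal.induction with
  | _ d IHd =>
  intro n
  induction n using Nat.strong_induction_on with
  | _ n IHn =>
  intro x y f A B l hc hA hB hl hcount
  by_cases hdone : ∀ G ∈ l, deg G.z < max (deg A.z) (deg B.z)
  · exact ⟨l, hc, hdone⟩
  push_neg at hdone
  obtain ⟨G₀, hG₀l, hG₀⟩ := hdone
  by_cases hd : ∃ G ∈ l, deg G.z = d
  · obtain ⟨G, hGl, hGd⟩ := hd
    obtain ⟨l₁, l₂, rfl⟩ := List.append_of_mem hGl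
    have hc' : List.Chain (E deg) A (l₁ ++ G :: (l₂ ++ [B])) := by
      simpa [List.append_assoc] using hc
    obtain ⟨hpre, hpost⟩ := List.isChain_cons_split.mp hc'
    obtain ⟨m, cm, hm⟩ := chain_surgery (Cm := fun m => ∀ H ∈ m, deg H.z < deg G.z)
      hpre hpost (fun P Q rPG rGQ hPmem hQmem => by
        refine elim hC G P Q rPG rGQ ?_ ?_
        · rcases hPmem with rfl | hP
          · exact hGd ▸ hA
          · exact hGd ▸ hl P (by simp [hP])
        · rcases hQmem with rfl | hQ
          · exact hGd ▸ hB
          · exact hGd ▸ hl Q (by simp [hQ]))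
    have hcount1 : 1 ≤ (l₁ ++ G :: l₂).countP (fun G => decide (deg G.z = d)) := by
      refine List.countP_pos_iff.mpr ⟨G, by simp, by simp [hGd]⟩
    have hn1 : 1 ≤ n := le_trans hcount1 hcount
    refine IHn (n - 1) (by omega) f A B (l₁ ++ m ++ l₂) ?_ hA hB ?_ ?_
    · simpa [List.append_assoc] using cm
    · intro H hH
      simp only [List.mem_append] at hH
      rcases hH with (hH | hH) | hH
      · exact hl H (by simp [hH])
      · exact le_of_lt (hGd ▸ hm H hH)
      · exact hl H (by simp [hH])
    · have hmzero : m.countP (fun G => decide (deg G.z = d)) = 0 := by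
        refine List.countP_eq_zero.mpr fun H hH => by
          simp only [decide_eq_true_eq]
          exact ne_of_lt (hGd ▸ hm H hH)
      have hold : (l₁ ++ G :: l₂).countP (fun G => decide (deg G.z = d)) =
          l₁.countP (fun G => decide (deg G.z = d)) +
          l₂.countP (fun G => decide (deg G.z = d)) + 1 := by
        simp [List.countP_append, List.countP_cons, hGd]
        ring
      have hnew : (l₁ ++ m ++ l₂).countP (fun G => decide (deg G.z = d)) =
          l₁.countP (fun G => decide (deg G.z = d)) +
          l₂.countP (fun G => decide (deg G.z = d)) := by
        simp [List.countP_append, hmzero]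
      rw [hold] at hcount
      omega
  · have hltd : ∀ G ∈ l, deg G.z < d := fun G hG =>
      lt_of_le_of_ne (hl G hG) (by push_neg at hd; exact hd G hG)
    have hmu : max (deg A.z) (deg B.z) < d := lt_of_le_of_lt hG₀ (hltd G₀ hG₀l)
    set d' := l.foldr (fun G r => max (deg G.z) r) (max (deg A.z) (deg B.z)) with hd'
    have h1 : max (deg A.z) (deg B.z) ≤ d' := le_foldr_max l _
    have h3 : d' < d := foldr_max_lt l hmu hltd
    exact IHd d' h3 l.length f A B l hc
      ((le_max_left _ _).trans h1) ((le_max_right _ _).trans h1)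
      (mem_le_foldr_max l _) List.countP_le_length

lemma conv {x y : C} {f : x ⟶ y} (F F' : FdFact deg f) :
    ∀ (a : FdFact deg f) (l : List (FdFact deg f)),
      List.Chain (E deg) a (l ++ [F']) →
      (∀ G ∈ l, deg G.z < max (deg F.z) (deg F'.z)) →
      ∀ (ha : deg a.z < max (deg F.z) (deg F'.z) ∨ a = F ∨ a = F'),
      Relation.ReflTransGen
        (fun u v : {G : FdFact deg f //
            deg G.z < max (deg F.z) (deg F'.z) ∨ G = F ∨ G = F'} =>
          FdConn deg u.1 v.1 ∨ FdConn deg v.1 u.1)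
        ⟨a, ha⟩ ⟨F', Or.inr (Or.inr rfl)⟩ := by
  intro a l
  induction l generalizing a with
  | nil =>
    intro hc _ ha
    rw [List.nil_append] at hc
    have e : E deg a F' := List.isChain_pair.mp hc
    exact Relation.ReflTransGen.single e
  | cons G t ih =>
    intro hc hdeg ha
    rw [List.cons_append] at hc
    obtain ⟨e, hc'⟩ := List.chain_cons.mp hc
    exact Relation.ReflTransGen.head (b := ⟨G, Or.inl (hdeg G (by simp))⟩) e
      (ih G hc' (fun H hH => hdeg H (by simp [hH])) _)

end AlmostReedyAux

open AlmostReedyAux in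
/-- In an almost-Reedy category, two fundamental factorizations of the same
morphism, of degrees `δ` and `δ'`, are connected by a zigzag of fundamental
factorizations passing only through intermediate factorizations of degree
strictly less than `max δ δ'`. -/
theorem almostReedy_bounded_zigzag (deg : C → Ordinal.{w}) (hC : AlmostReedy deg)
    {x y : C} (f : x ⟶ y) (F F' : FdFact deg f) :
    Relation.ReflTransGen
      (fun a b : {G : FdFact deg f //
          deg G.z < max (deg F.z) (deg F'.z) ∨ G = F ∨ G = F'} =>
        FdConn deg a.1 b.1 ∨ FdConn deg b.1 a.1)
      ⟨F, Or.inr (Or.inl rfl)⟩ ⟨F', Or.inr (Or.inr rfl)⟩ := by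
  classical
  rcases exists_chain_of_rtg (hC.2.2 f F F') with heq | ⟨l, hl⟩
  · subst heq
    exact Relation.ReflTransGen.refl
  · set d := l.foldr (fun G r => max (deg G.z) r) (max (deg F.z) (deg F'.z))
      with hd
    obtain ⟨l', hc', hlt⟩ := main hC d l.length f F F' l hl
      ((le_max_left _ _).trans (le_foldr_max l _))
      ((le_max_right _ _).trans (le_foldr_max l _))
      (mem_le_foldr_max l _) List.countP_le_length
    exact conv F F' F l' hc' hlt (Or.inr (Or.inl rfl))
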